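/- Let G = ℤ_n be a cyclic group of order n and G = MS a complete splitting with 0 ≡ m·g (mod n) for some m ∈ M, g ∈ S. Then M is a complete set of representatives modulo gcd(m,n) = n/gcd(g,n), and S is a complete set of representatives modulo n/gcd(m,n) = gcd(g,n). -/

import Mathlib

theorem stmt_6 (n : ℕ) (hn : 0 < n)
    (M : Finset ℤ) (S : Finset (ZMod n))
    (hCS : ∀ x : ZMod n, ∃! p : ℤ × ZMod n, p.1 ∈ M ∧ p.2 ∈ S ∧ p.1 • p.2 = x)
    (m : ℤ) (g : ZMod n) (hm : m ∈ M) (hg : g ∈ S) (h0 : m • g = 0) :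
    Int.gcd m n = n / Nat.gcd (ZMod.val g) n ∧
    n / Int.gcd m n = Nat.gcd (ZMod.val g) n ∧
    (∀ r : ZMod (Int.gcd m n), ∃! m' : ℤ, m' ∈ M ∧ (m' : ZMod (Int.gcd m n)) = r) ∧
    (∀ r : ZMod (n / Int.gcd m n), ∃! s : ZMod n,
      s ∈ S ∧ ((ZMod.val s : ℤ) : ZMod (n / Int.gcd m n)) = r) := by
  haveI : NeZero n := ⟨hn.ne'⟩
  set d := Int.gcd m n with hd
  set k := addOrderOf g with hk
  set a : ZMod n := (m : ZMod n) with ha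
  set j := addOrderOf a with hj
  -- basic divisibilities
  have hdm : (d : ℤ) ∣ m := Int.gcd_dvd_left m n
  have hdn : d ∣ n := by
    have := Int.gcd_dvd_right (a := m) (b := (n : ℤ))
    exact_mod_cast this
  have hdpos : 0 < d := Int.gcd_pos_iff.mpr (Or.inr (by exact_mod_cast hn.ne'))
  have hkm : (k : ℤ) ∣ m := addOrderOf_dvd_iff_zsmul_eq_zero.mpr h0
  have hkn : k ∣ n := by
    have := addOrderOf_dvd_card (x := g); rwa [ZMod.card] at this
  have hkd : k ∣ d := by
    rw [hd, Int.gcd_def]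
    refine Nat.dvd_gcd ?_ (by simpa using hkn)
    have := Int.natAbs_dvd_natAbs.mpr hkm
    simpa using this
  have hkpos : 0 < k := addOrderOf_pos g
  have hjpos : 0 < j := addOrderOf_pos a
  -- the key uniqueness consequence
  have key : ∀ m₁ ∈ M, ∀ m₂ ∈ M, ∀ s₁ ∈ S, ∀ s₂ ∈ S,
      m₁ • s₁ = m₂ • s₂ → m₁ = m₂ ∧ s₁ = s₂ := by
    intro m₁ h₁ m₂ h₂ s₁ hs₁ s₂ hs₂ he
    obtain ⟨p, _, hu⟩ := hCS (m₁ • s₁)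
    have e1 := hu (m₁, s₁) ⟨h₁, hs₁, rfl⟩
    have e2 := hu (m₂, s₂) ⟨h₂, hs₂, he.symm⟩
    have : (m₁, s₁) = (m₂, s₂) := e1.trans e2.symm
    exact ⟨congrArg Prod.fst this, congrArg Prod.snd this⟩
  -- core injectivity for M
  have Mcore : ∀ m₁ ∈ M, ∀ m₂ ∈ M, (k : ℤ) ∣ m₂ - m₁ → m₁ = m₂ := by
    intro m₁ h₁ m₂ h₂ hdvd
    have hz : (m₂ - m₁) • g = 0 := addOrderOf_dvd_iff_zsmul_eq_zero.mp hdvd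
    have : m₁ • g = m₂ • g := by
      have h2 := sub_zsmul g m₂ m₁
      rw [hz] at h2
      have h3 : m₂ • g + -(m₁ • g) = 0 := h2.symm
      rw [add_neg_eq_zero] at h3
      exact h3.symm
    exact (key m₁ h₁ m₂ h₂ g hg g hg this).1
  -- core injectivity for S
  have hms : ∀ s : ZMod n, m • s = ((s.val : ℤ)) • a := by
    intro s
    rw [zsmul_eq_mul, zsmul_eq_mul, ha]
    push_cast
    rw [ZMod.natCast_rightInverse s, mul_comm]
  have Score : ∀ s₁ ∈ S, ∀ s₂ ∈ S, (j : ℤ) ∣ ((s₂.val : ℤ) - (s₁.val : ℤ)) → s₁ = s₂ := by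
    intro s₁ h₁ s₂ h₂ hdvd
    have hz : ((s₂.val : ℤ) - (s₁.val : ℤ)) • a = 0 :=
      addOrderOf_dvd_iff_zsmul_eq_zero.mp hdvd
    have : m • s₁ = m • s₂ := by
      rw [hms s₁, hms s₂]
      have h2 := sub_zsmul a (s₂.val : ℤ) (s₁.val : ℤ)
      rw [hz] at h2
      have h3 : (s₂.val : ℤ) • a + -((s₁.val : ℤ) • a) = 0 := h2.symm
      rw [add_neg_eq_zero] at h3
      exact h3.symm
    exact (key m hm m hm s₁ h₁ s₂ h₂ this).2
  -- cardinality of the splitting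
  have hcard : M.card * S.card = n := by
    have h1 : (M ×ˢ S).card = (Finset.univ : Finset (ZMod n)).card := by
      apply Finset.card_bij (fun p _ => p.1 • p.2)
      · intro p _; exact Finset.mem_univ _
      · intro p hp q hq he
        rcases Finset.mem_product.mp hp with ⟨hp1, hp2⟩
        rcases Finset.mem_product.mp hq with ⟨hq1, hq2⟩
        obtain ⟨h1, h2⟩ := key p.1 hp1 q.1 hq1 p.2 hp2 q.2 hq2 he
        exact Prod.ext h1 h2
      · intro x _
        obtain ⟨p, ⟨hp1, hp2, hp3⟩, _⟩ := hCS x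
        exact ⟨p, Finset.mem_product.mpr ⟨hp1, hp2⟩, hp3⟩
    rwa [Finset.card_product, Finset.card_univ, ZMod.card] at h1
  -- card bounds
  haveI : NeZero k := ⟨hkpos.ne'⟩
  haveI : NeZero j := ⟨hjpos.ne'⟩
  have hMk : M.card ≤ k := by
    have := Finset.card_le_card_of_injOn (fun x : ℤ => (x : ZMod k))
      (fun x _ => Finset.mem_univ _) (s := M) (t := Finset.univ) ?_
    · rwa [Finset.card_univ, ZMod.card] at this
    · intro m₁ h₁ m₂ h₂ he
      refine Mcore m₁ h₁ m₂ h₂ ?_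
      exact ((ZMod.intCast_eq_intCast_iff _ _ _).mp he).dvd
  have hSj : S.card ≤ j := by
    have := Finset.card_le_card_of_injOn (fun s : ZMod n => ((s.val : ℤ) : ZMod j))
      (fun x _ => Finset.mem_univ _) (s := S) (t := Finset.univ) ?_
    · rwa [Finset.card_univ, ZMod.card] at this
    · intro s₁ h₁ s₂ h₂ he
      refine Score s₁ h₁ s₂ h₂ ?_
      exact ((ZMod.intCast_eq_intCast_iff _ _ _).mp he).dvd
  -- gcd identification for a
  have hmod : ((a.val : ℤ)) ≡ m [ZMOD n] := by
    rw [← ZMod.intCast_eq_intCast_iff]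
    push_cast
    rw [ZMod.natCast_rightInverse a]
  have hnd : (n : ℤ) ∣ m - (a.val : ℤ) := hmod.dvd
  have hgcd_a : Nat.gcd n a.val = d := by
    apply Nat.dvd_antisymm
    · have h1 : ((Nat.gcd n a.val : ℤ)) ∣ m := by
        have hx : ((Nat.gcd n a.val : ℤ)) ∣ (n : ℤ) := by exact_mod_cast Nat.gcd_dvd_left _ _
        have hy : ((Nat.gcd n a.val : ℤ)) ∣ (a.val : ℤ) := by exact_mod_cast Nat.gcd_dvd_right _ _
        have : m = (m - (a.val : ℤ)) + (a.val : ℤ) := by ring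
        rw [this]
        exact dvd_add (hx.trans hnd) hy
      have := Int.dvd_gcd h1 (by exact_mod_cast Nat.gcd_dvd_left n a.val : ((Nat.gcd n a.val : ℤ)) ∣ (n:ℤ))
      exact_mod_cast this
    · refine Nat.dvd_gcd hdn ?_
      have h1 : (d : ℤ) ∣ (a.val : ℤ) := by
        have : (a.val : ℤ) = m - (m - (a.val : ℤ)) := by ring
        rw [this]
        exact dvd_sub hdm ((Int.natCast_dvd_natCast.mpr hdn).trans hnd)
      exact_mod_cast h1
  have hjval : j = n / d := by
    have h1 : addOrderOf ((a.val : ℕ) : ZMod n) = n / n.gcd a.val :=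
      ZMod.addOrderOf_coe _ hn.ne'
    rw [ZMod.natCast_rightInverse a] at h1
    rw [hj, h1, hgcd_a]
  have hkval : k = n / Nat.gcd n g.val := by
    have h1 : addOrderOf ((g.val : ℕ) : ZMod n) = n / n.gcd g.val :=
      ZMod.addOrderOf_coe _ hn.ne'
    rw [ZMod.natCast_rightInverse g] at h1
    rw [hk, h1]
  -- arithmetic: k = d, M.card = d, S.card = n/d
  have hndpos : 0 < n / d := Nat.div_pos (Nat.le_of_dvd hn hdn) hdpos
  have hdd : d * (n / d) = n := Nat.mul_div_cancel' hdn
  have hkled : k ≤ d := Nat.le_of_dvd hdpos hkd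
  have hchain : n ≤ k * (n / d) := by
    calc n = M.card * S.card := hcard.symm
    _ ≤ k * (n / d) := Nat.mul_le_mul hMk (hjval ▸ hSj)
  have hkeqd : k = d := by
    have h1 : k * (n / d) ≤ n := by
      calc k * (n / d) ≤ d * (n / d) := Nat.mul_le_mul_right _ hkled
      _ = n := hdd
    have h2 : k * (n / d) = d * (n / d) := by
      rw [hdd]; exact le_antisymm h1 hchain
    exact Nat.eq_of_mul_eq_mul_right hndpos h2
  have hMcard : M.card = d := by
    have hMd : M.card ≤ d := hkeqd ▸ hMk
    have hSd : S.card ≤ n / d := hjval ▸ hSj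
    by_contra hne
    have hlt : M.card < d := lt_of_le_of_ne hMd hne
    have : M.card * S.card < d * (n / d) := by
      have hSpos : 0 < S.card := by
        rcases Nat.eq_zero_or_pos S.card with h | h
        · rw [h, Nat.mul_zero] at hcard; omega
        · exact h
      calc M.card * S.card < d * S.card := (Nat.mul_lt_mul_right hSpos).mpr hlt
      _ ≤ d * (n / d) := Nat.mul_le_mul_left _ hSd
    rw [hcard, hdd] at this; omega
  have hScard : S.card = n / d := by
    have h1 : d * S.card = n := by rw [← hMcard]; exact hcard
    have h2 : d * S.card = d * (n / d) := by rw [hdd]; exact h1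
    exact Nat.eq_of_mul_eq_mul_left hdpos h2
  haveI : NeZero d := ⟨hdpos.ne'⟩
  haveI : NeZero (n / d) := ⟨hndpos.ne'⟩
  -- injectivity facts for the final statements
  have Minj : ∀ m₁ ∈ M, ∀ m₂ ∈ M, ((m₁ : ZMod d) = (m₂ : ZMod d)) → m₁ = m₂ := by
    intro m₁ h₁ m₂ h₂ he
    refine Mcore m₁ h₁ m₂ h₂ ?_
    have := ((ZMod.intCast_eq_intCast_iff _ _ _).mp he).dvd
    exact dvd_trans (by exact_mod_cast Int.natCast_dvd_natCast.mpr hkd) this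
  have Sinj : ∀ s₁ ∈ S, ∀ s₂ ∈ S,
      (((s₁.val : ℤ) : ZMod (n / d)) = ((s₂.val : ℤ) : ZMod (n / d))) → s₁ = s₂ := by
    intro s₁ h₁ s₂ h₂ he
    refine Score s₁ h₁ s₂ h₂ ?_
    have := ((ZMod.intCast_eq_intCast_iff _ _ _).mp he).dvd
    rwa [hjval]
  -- surjectivity via counting
  have Msurj : ∀ r : ZMod d, ∃ m' ∈ M, (m' : ZMod d) = r := by
    intro r
    have himg : (M.image (fun x : ℤ => (x : ZMod d))) = Finset.univ := by
      apply Finset.eq_univ_of_card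
      rw [Finset.card_image_of_injOn, hMcard, ZMod.card]
      intro m₁ h₁ m₂ h₂ he
      exact Minj m₁ h₁ m₂ h₂ he
    have : r ∈ M.image (fun x : ℤ => (x : ZMod d)) := himg ▸ Finset.mem_univ r
    obtain ⟨m', hm', he⟩ := Finset.mem_image.mp this
    exact ⟨m', hm', he⟩
  have Ssurj : ∀ r : ZMod (n / d), ∃ s ∈ S, ((s.val : ℤ) : ZMod (n / d)) = r := by
    intro r
    have himg : (S.image (fun s : ZMod n => ((s.val : ℤ) : ZMod (n / d)))) = Finset.univ := by
      apply Finset.eq_univ_of_card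
      rw [Finset.card_image_of_injOn, hScard, ZMod.card]
      intro s₁ h₁ s₂ h₂ he
      exact Sinj s₁ h₁ s₂ h₂ he
    have : r ∈ S.image (fun s : ZMod n => ((s.val : ℤ) : ZMod (n / d))) :=
      himg ▸ Finset.mem_univ r
    obtain ⟨s, hs, he⟩ := Finset.mem_image.mp this
    exact ⟨s, hs, he⟩
  refine ⟨?_, ?_, ?_, ?_⟩
  · rw [← hkeqd, hkval, Nat.gcd_comm]
  · have he : Nat.gcd n g.val ∣ n := Nat.gcd_dvd_left _ _
    rw [← hkeqd, hkval, Nat.div_div_self he hn.ne', Nat.gcd_comm]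
  · intro r
    obtain ⟨m', hm', he⟩ := Msurj r
    exact ⟨m', ⟨hm', he⟩, fun y ⟨hy, hye⟩ => Minj y hy m' hm' (hye.trans he.symm)⟩
  · intro r
    obtain ⟨s, hs, he⟩ := Ssurj r
    exact ⟨s, ⟨hs, he⟩, fun y ⟨hy, hye⟩ => Sinj y hy s hs (hye.trans he.symm)⟩
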